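/- With B as defined (p ≥ 2, q = p/(p-1), δ = q(q-1)/8), for all u, v > 0 with u^p ≠ v^q one has the lower bound u^{-1}·∂_u B(u,v) ≥ 2δ·v^{2-q}. -/

import Mathlib

noncomputable def Bell (p q δ u v : ℝ) : ℝ :=
  if v ^ q ≤ u ^ p then
    u ^ p + v ^ q + δ * ((2 / p) * u ^ p + (2 / q - 1) * v ^ q)
  else
    u ^ p + v ^ q + δ * (u ^ (2 : ℝ) * v ^ (2 - q))

theorem bellman_first_derivative_u (p q δ u v : ℝ) (hp : 2 ≤ p) (hq : q = p / (p - 1))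
    (hδ : δ = q * (q - 1) / 8) (hu : 0 < u) (hv : 0 < v) (hne : u ^ p ≠ v ^ q) :
    2 * δ * v ^ (2 - q) ≤ u⁻¹ * deriv (fun u' => Bell p q δ u' v) u := by
  have hp0 : (0:ℝ) < p := by linarith
  have hp1 : (0:ℝ) < p - 1 := by linarith
  have hq0 : 0 < q := by rw [hq]; positivity
  have hq1 : q - 1 ≥ 0 := by
    rw [hq]
    have : p / (p-1) - 1 = 1 / (p-1) := by field_simp; ring
    rw [this]; positivity
  have hδ0 : 0 ≤ δ := by rw [hδ]; positivity
  have hcont : ContinuousAt (fun x : ℝ => x ^ p) u :=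
    Real.continuousAt_rpow_const u p (Or.inl hu.ne')
  have h1 : HasDerivAt (fun x : ℝ => x ^ p) (p * u ^ (p - 1)) u :=
    Real.hasDerivAt_rpow_const (Or.inl hu.ne')
  have hup2 : (0:ℝ) ≤ u ^ (p - 2) := (Real.rpow_pos_of_pos hu _).le
  have hsplit : u ^ (p - 1) = u ^ (p - 2) * u := by
    rw [show p - 1 = (p - 2) + 1 by ring, Real.rpow_add hu, Real.rpow_one]
  rcases hne.lt_or_gt with hgt | hgt
  · -- u^p < v^q : second branch
    have hev : (fun u' => Bell p q δ u' v) =ᶠ[nhds u]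
        fun u' => u' ^ p + v ^ q + δ * (u' ^ (2:ℝ) * v ^ (2 - q)) := by
      filter_upwards [hcont (Iio_mem_nhds hgt)] with x hx
      have hx' : x ^ p < v ^ q := hx
      simp only [Bell, if_neg (not_le.mpr hx')]
    have h2 : HasDerivAt (fun x : ℝ => x ^ (2:ℝ)) (2 * u ^ ((2:ℝ) - 1)) u :=
      Real.hasDerivAt_rpow_const (Or.inl hu.ne')
    have hD : HasDerivAt (fun u' => u' ^ p + v ^ q + δ * (u' ^ (2:ℝ) * v ^ (2 - q)))
        (p * u ^ (p - 1) + δ * ((2 * u ^ ((2:ℝ) - 1)) * v ^ (2 - q))) u :=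
      (h1.add_const _).add (((h2.mul_const _).const_mul δ))
    rw [hev.deriv_eq, hD.deriv]
    have : u ^ ((2:ℝ) - 1) = u := by norm_num
    rw [this]
    have : u⁻¹ * (p * u ^ (p - 1) + δ * (2 * u * v ^ (2 - q)))
        = p * u ^ (p - 2) + 2 * δ * v ^ (2 - q) := by
      rw [hsplit]; field_simp
    rw [this]
    nlinarith [Real.rpow_pos_of_pos hu (p - 2), mul_pos hp0 (Real.rpow_pos_of_pos hu (p-2))]
  · -- v^q < u^p : first branch
    have hev : (fun u' => Bell p q δ u' v) =ᶠ[nhds u]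
        fun u' => u' ^ p + v ^ q + δ * ((2 / p) * u' ^ p + (2 / q - 1) * v ^ q) := by
      filter_upwards [hcont (Ioi_mem_nhds hgt)] with x hx
      have hx' : v ^ q < x ^ p := hx
      simp only [Bell, if_pos (le_of_lt hx')]
    have hD : HasDerivAt (fun u' => u' ^ p + v ^ q + δ * ((2 / p) * u' ^ p + (2 / q - 1) * v ^ q))
        (p * u ^ (p - 1) + δ * ((2 / p) * (p * u ^ (p - 1)))) u :=
      (h1.add_const _).add (((h1.const_mul (2 / p)).add_const _).const_mul δ)
    rw [hev.deriv_eq, hD.deriv]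
    have hval : u⁻¹ * (p * u ^ (p - 1) + δ * ((2 / p) * (p * u ^ (p - 1))))
        = (p + 2 * δ) * u ^ (p - 2) := by
      rw [hsplit]; field_simp
    rw [hval]
    -- show v ^ (2 - q) ≤ u ^ (p - 2)
    have hkey : v ^ (2 - q) ≤ u ^ (p - 2) := by
      have h : (v ^ q) ^ ((p - 2) / p) ≤ (u ^ p) ^ ((p - 2) / p) :=
        Real.rpow_le_rpow (Real.rpow_pos_of_pos hv q).le hgt.le
          (div_nonneg (by linarith) hp0.le)
      rw [← Real.rpow_mul hv.le, ← Real.rpow_mul hu.le] at h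
      have e1 : q * ((p - 2) / p) = 2 - q := by
        rw [hq]; field_simp [hp0.ne', hp1.ne']; ring
      have e2 : p * ((p - 2) / p) = p - 2 := by field_simp [hp0.ne']
      rwa [e1, e2] at h
    nlinarith [Real.rpow_pos_of_pos hv (2 - q)]
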